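/- Let h be a fixed nonzero Hermitian traceless 4×4 matrix with ‖h‖ ≤ 1, and for each n ≥ 3 let H = Σ_{i∈ℤ/nℤ} H_i be the translation-invariant nearest-neighbor Hamiltonian on n qubits generated by h; assume tr(H_i H_j) = 0 for all i ≠ j. Then for every positive even integer m there exist constants c_m, C_m > 0 such that for all n ≥ 3: c_m n^{m/2} ≤ tr(H^m)/2^n ≤ C_m n^{m/2}. (One may take c_m = ⟨H_1²⟩^{m/2} where ⟨X⟩ := tr(X)/2^n.) -/

import Mathlib

open Matrix Filter Finset
open scoped Classical ComplexOrder

/-- computational basis configurations of `n` qubits -/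
abbrev Cfg (n : ℕ) := Fin n → Fin 2

/-- the site following `i` in the cyclic order on `ℤ/nℤ` -/
def nxt {n : ℕ} (i : Fin n) : Fin n :=
  ⟨(i.1 + 1) % n, Nat.mod_lt _ (Nat.lt_of_le_of_lt (Nat.zero_le _) i.2)⟩

/-- the operator acting as the 4×4 matrix `h` on the two neighboring sites `i, i+1`
and as the identity elsewhere -/
noncomputable def twoSite (n : ℕ) (i : Fin n)
    (h : Matrix (Fin 2 × Fin 2) (Fin 2 × Fin 2) ℂ) : Matrix (Cfg n) (Cfg n) ℂ :=
  fun x y =>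
    if ∀ j : Fin n, j ≠ i → j ≠ nxt i → x j = y j then
      h (x i, x (nxt i)) (y i, y (nxt i))
    else 0

lemma nxt_ne {n : ℕ} (hn : 2 ≤ n) (i : Fin n) : nxt i ≠ i := by
  simp only [nxt, Fin.ext_iff, Ne]
  intro hmod
  rcases Nat.lt_or_ge (i.1 + 1) n with hlt | hge
  · rw [Nat.mod_eq_of_lt hlt] at hmod; omega
  · have hin : i.1 < n := i.2
    have : i.1 + 1 = n := by omega
    rw [this, Nat.mod_self] at hmod; omega

/-- sites other than `i` and `i+1` -/
def Rsub (n : ℕ) (i : Fin n) := {j : Fin n // j ≠ i ∧ j ≠ nxt i}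

instance {n : ℕ} (i : Fin n) : Fintype (Rsub n i) := by unfold Rsub; infer_instance

/-- splitting a configuration into the pair at `i, i+1` and the rest -/
noncomputable def siteEquiv (n : ℕ) (i : Fin n) (hn : 2 ≤ n) :
    Cfg n ≃ (Fin 2 × Fin 2) × (Rsub n i → Fin 2) where
  toFun x := ((x i, x (nxt i)), fun j => x j.1)
  invFun pr := fun j =>
    if hj : j = i then pr.1.1 else if hj2 : j = nxt i then pr.1.2 else pr.2 ⟨j, hj, hj2⟩
  left_inv x := by
    funext j
    by_cases hj : j = i
    · subst hj; simp
    · by_cases hj2 : j = nxt i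
      · subst hj2; simp [hj]
      · simp [hj, hj2]
  right_inv pr := by
    ext j
    · simp
    · simp [(nxt_ne hn i)]
    · simp [j.2.1, j.2.2]
      rfl

lemma siteEquiv_symm_at_i {n : ℕ} (i : Fin n) (hn : 2 ≤ n) (p : Fin 2 × Fin 2)
    (r : Rsub n i → Fin 2) : (siteEquiv n i hn).symm (p, r) i = p.1 := by
  simp [siteEquiv]

lemma siteEquiv_symm_at_nxt {n : ℕ} (i : Fin n) (hn : 2 ≤ n) (p : Fin 2 × Fin 2)
    (r : Rsub n i → Fin 2) : (siteEquiv n i hn).symm (p, r) (nxt i) = p.2 := by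
  simp [siteEquiv, nxt_ne hn i]

lemma siteEquiv_symm_at_other {n : ℕ} (i : Fin n) (hn : 2 ≤ n) (p : Fin 2 × Fin 2)
    (r : Rsub n i → Fin 2) (j : Fin n) (hj : j ≠ i) (hj2 : j ≠ nxt i) :
    (siteEquiv n i hn).symm (p, r) j = r ⟨j, hj, hj2⟩ := by
  simp [siteEquiv, hj, hj2]

lemma cond_iff {n : ℕ} (i : Fin n) (hn : 2 ≤ n) (p q : Fin 2 × Fin 2)
    (r s : Rsub n i → Fin 2) :
    (∀ j : Fin n, j ≠ i → j ≠ nxt i →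
      (siteEquiv n i hn).symm (p, r) j = (siteEquiv n i hn).symm (q, s) j) ↔ r = s := by
  constructor
  · intro H
    funext j
    have := H j.1 j.2.1 j.2.2
    rwa [siteEquiv_symm_at_other i hn p r j.1 j.2.1 j.2.2,
      siteEquiv_symm_at_other i hn q s j.1 j.2.1 j.2.2] at this
  · rintro rfl j hj hj2
    rw [siteEquiv_symm_at_other i hn p r j hj hj2, siteEquiv_symm_at_other i hn q r j hj hj2]

lemma twoSite_apply_symm {n : ℕ} (i : Fin n) (hn : 2 ≤ n)
    (g : Matrix (Fin 2 × Fin 2) (Fin 2 × Fin 2) ℂ) (p q : Fin 2 × Fin 2)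
    (r s : Rsub n i → Fin 2) :
    twoSite n i g ((siteEquiv n i hn).symm (p, r)) ((siteEquiv n i hn).symm (q, s))
      = if r = s then g p q else 0 := by
  simp only [twoSite]
  rw [siteEquiv_symm_at_i, siteEquiv_symm_at_nxt, siteEquiv_symm_at_i, siteEquiv_symm_at_nxt]
  by_cases hrs : r = s
  · rw [if_pos ((cond_iff i hn p q r s).mpr hrs), if_pos hrs]
  · rw [if_neg (fun H => hrs ((cond_iff i hn p q r s).mp H)), if_neg hrs]

lemma card_Cfg (n : ℕ) : Fintype.card (Cfg n) = 2 ^ n := by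
  simp [Fintype.card_fun]

lemma card_Rsub {n : ℕ} (hn : 2 ≤ n) (i : Fin n) : Fintype.card (Rsub n i) = n - 2 := by
  unfold Rsub
  refine (Fintype.card_of_subtype (univ.filter (fun j : Fin n => j ≠ i ∧ j ≠ nxt i)) (by simp)).trans ?_
  have : (univ.filter (fun j : Fin n => j ≠ i ∧ j ≠ nxt i)) = univ \ {i, nxt i} := by
    ext j; simp [not_or]
  rw [this, Finset.card_sdiff_of_subset (by simp)]
  rw [Finset.card_insert_of_notMem (by simp [(nxt_ne hn i).symm]), Finset.card_singleton]
  simp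

lemma trace_twoSite_mul {n : ℕ} (hn : 2 ≤ n) (i : Fin n)
    (g1 g2 : Matrix (Fin 2 × Fin 2) (Fin 2 × Fin 2) ℂ) :
    (twoSite n i g1 * twoSite n i g2).trace = (2 ^ (n - 2) : ℂ) * (g1 * g2).trace := by
  have tr : (twoSite n i g1 * twoSite n i g2).trace
      = ∑ x : Cfg n, ∑ y : Cfg n, twoSite n i g1 x y * twoSite n i g2 y x := by
    simp [Matrix.trace, Matrix.diag, Matrix.mul_apply]
  rw [tr]
  rw [← Equiv.sum_comp (siteEquiv n i hn).symm
      (fun x => ∑ y : Cfg n, twoSite n i g1 x y * twoSite n i g2 y x)]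
  have inner : ∀ pr : (Fin 2 × Fin 2) × (Rsub n i → Fin 2),
      (∑ y : Cfg n, twoSite n i g1 ((siteEquiv n i hn).symm pr) y
        * twoSite n i g2 y ((siteEquiv n i hn).symm pr))
      = ∑ q : Fin 2 × Fin 2, g1 pr.1 q * g2 q pr.1 := by
    rintro ⟨p, r⟩
    rw [← Equiv.sum_comp (siteEquiv n i hn).symm
      (fun y => twoSite n i g1 ((siteEquiv n i hn).symm (p, r)) y
        * twoSite n i g2 y ((siteEquiv n i hn).symm (p, r)))]
    rw [Fintype.sum_prod_type]
    simp only [twoSite_apply_symm i hn]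
    simp [Finset.sum_ite_eq, eq_comm]
  rw [Fintype.sum_congr _ _ inner]
  rw [Fintype.sum_prod_type]
  simp only [Finset.sum_const, card_univ]
  rw [Fintype.card_fun, card_Rsub hn i, Fintype.card_fin]
  have : (g1 * g2).trace = ∑ p : Fin 2 × Fin 2, ∑ q : Fin 2 × Fin 2, g1 p q * g2 q p := by
    simp [Matrix.trace, Matrix.diag, Matrix.mul_apply]
  rw [this]
  simp [Finset.mul_sum, mul_comm, smul_sum]

lemma twoSite_isHermitian {n : ℕ} (i : Fin n)
    {g : Matrix (Fin 2 × Fin 2) (Fin 2 × Fin 2) ℂ} (hg : g.IsHermitian) :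
    (twoSite n i g).IsHermitian := by
  ext x y
  simp only [conjTranspose_apply, twoSite]
  have hc : (∀ j : Fin n, j ≠ i → j ≠ nxt i → y j = x j)
      ↔ (∀ j : Fin n, j ≠ i → j ≠ nxt i → x j = y j) := by
    constructor <;> (intro H j h1 h2; exact (H j h1 h2).symm)
  by_cases hcc : ∀ j : Fin n, j ≠ i → j ≠ nxt i → x j = y j
  · rw [if_pos hcc, if_pos (hc.mpr hcc)]
    exact hg.apply _ _
  · rw [if_neg hcc, if_neg (fun H => hcc (hc.mp H)), star_zero]

/-! ### matrices supported away from the pair of sites `v, v+1` -/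

def zeroT {n : ℕ} (v : Fin n) (x : Cfg n) : Cfg n :=
  fun j => if j = v ∨ j = nxt v then 0 else x j

def Away {n : ℕ} (v : Fin n) (X : Matrix (Cfg n) (Cfg n) ℂ) : Prop :=
  ∀ x y, X x y =
    if x v = y v ∧ x (nxt v) = y (nxt v) then X (zeroT v x) (zeroT v y) else 0

lemma zeroT_at_v {n : ℕ} (v : Fin n) (x : Cfg n) : zeroT v x v = 0 := by
  simp [zeroT]

lemma zeroT_at_nxt {n : ℕ} (v : Fin n) (x : Cfg n) : zeroT v x (nxt v) = 0 := by
  simp [zeroT]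

lemma zeroT_other {n : ℕ} (v : Fin n) (x : Cfg n) (j : Fin n) (h1 : j ≠ v) (h2 : j ≠ nxt v) :
    zeroT v x j = x j := by
  simp [zeroT, h1, h2]

lemma zeroT_idem {n : ℕ} (v : Fin n) (x : Cfg n) : zeroT v (zeroT v x) = zeroT v x := by
  funext j; by_cases hj : j = v ∨ j = nxt v <;> simp [zeroT, hj]

lemma zeroT_symm {n : ℕ} (v : Fin n) (hn : 2 ≤ n) (p : Fin 2 × Fin 2) (r : Rsub n v → Fin 2) :
    zeroT v ((siteEquiv n v hn).symm (p, r)) = (siteEquiv n v hn).symm ((0, 0), r) := by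
  funext j
  by_cases h1 : j = v
  · subst h1; rw [siteEquiv_symm_at_i]; simp [zeroT]
  · by_cases h2 : j = nxt v
    · subst h2; rw [siteEquiv_symm_at_nxt]; simp [zeroT]
    · rw [zeroT_other v _ j h1 h2, siteEquiv_symm_at_other v hn _ _ j h1 h2,
        siteEquiv_symm_at_other v hn _ _ j h1 h2]

lemma away_one {n : ℕ} (v : Fin n) : Away v (1 : Matrix (Cfg n) (Cfg n) ℂ) := by
  intro x y
  by_cases hc : x v = y v ∧ x (nxt v) = y (nxt v)
  · rw [if_pos hc]
    have : x = y ↔ zeroT v x = zeroT v y := by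
      constructor
      · rintro rfl; rfl
      · intro H
        funext j
        by_cases h1 : j = v
        · subst h1; exact hc.1
        · by_cases h2 : j = nxt v
          · subst h2; exact hc.2
          · have := congrFun H j
            rwa [zeroT_other v x j h1 h2, zeroT_other v y j h1 h2] at this
    by_cases hxy : x = y
    · subst hxy; rw [Matrix.one_apply_eq, Matrix.one_apply_eq]
    · rw [Matrix.one_apply_ne hxy, Matrix.one_apply_ne (fun H => hxy (this.mpr H))]
  · rw [if_neg hc, Matrix.one_apply_ne]
    rintro rfl
    exact hc ⟨rfl, rfl⟩

/-- key summation: summing a function of the zeroed configuration with the two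
distinguished coordinates pinned -/
lemma sum_pinned {n : ℕ} (v : Fin n) (hn : 2 ≤ n) (F : Cfg n → ℂ) (a b : Fin 2) :
    (∑ z : Cfg n, if z v = a ∧ z (nxt v) = b then F (zeroT v z) else 0)
      = ∑ s : Rsub n v → Fin 2, F ((siteEquiv n v hn).symm ((0, 0), s)) := by
  rw [← Equiv.sum_comp (siteEquiv n v hn).symm
    (fun z => if z v = a ∧ z (nxt v) = b then F (zeroT v z) else 0)]
  rw [Fintype.sum_prod_type]
  have : ∀ (q : Fin 2 × Fin 2) (s : Rsub n v → Fin 2),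
      (if (siteEquiv n v hn).symm (q, s) v = a ∧ (siteEquiv n v hn).symm (q, s) (nxt v) = b
        then F (zeroT v ((siteEquiv n v hn).symm (q, s))) else 0)
      = if q = (a, b) then F ((siteEquiv n v hn).symm ((0, 0), s)) else 0 := by
    intro q s
    rw [siteEquiv_symm_at_i, siteEquiv_symm_at_nxt, zeroT_symm v hn]
    congr 1
    simp [Prod.ext_iff]
  simp only [this]
  rw [Finset.sum_comm]
  simp [Finset.sum_ite_eq']

lemma away_mul {n : ℕ} (v : Fin n) (hn : 2 ≤ n) {X Y : Matrix (Cfg n) (Cfg n) ℂ}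
    (hX : Away v X) (hY : Away v Y) : Away v (X * Y) := by
  intro x y
  by_cases hc : x v = y v ∧ x (nxt v) = y (nxt v)
  · rw [if_pos hc]
    rw [Matrix.mul_apply, Matrix.mul_apply]
    have lhs : ∀ z : Cfg n, X x z * Y z y
        = if z v = x v ∧ z (nxt v) = x (nxt v)
          then X (zeroT v x) (zeroT v z) * Y (zeroT v z) (zeroT v y) else 0 := by
      intro z
      by_cases hz : z v = x v ∧ z (nxt v) = x (nxt v)
      · rw [if_pos hz, hX x z, hY z y, if_pos ⟨hz.1.symm, hz.2.symm⟩,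
          if_pos ⟨hz.1.trans hc.1, hz.2.trans hc.2⟩]
      · rw [if_neg hz, hX x z, if_neg (fun H => hz ⟨H.1.symm, H.2.symm⟩), zero_mul]
    have rhs : ∀ z : Cfg n, X (zeroT v x) z * Y z (zeroT v y)
        = if z v = 0 ∧ z (nxt v) = 0
          then X (zeroT v x) (zeroT v z) * Y (zeroT v z) (zeroT v y) else 0 := by
      intro z
      by_cases hz : z v = 0 ∧ z (nxt v) = 0
      · rw [if_pos hz, hX (zeroT v x) z, hY z (zeroT v y),
          if_pos ⟨by rw [zeroT_at_v, hz.1], by rw [zeroT_at_nxt, hz.2]⟩,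
          if_pos ⟨by rw [zeroT_at_v, hz.1], by rw [zeroT_at_nxt, hz.2]⟩,
          zeroT_idem, zeroT_idem]
      · rw [if_neg hz, hX (zeroT v x) z,
          if_neg (fun H => hz ⟨by rw [← H.1, zeroT_at_v], by rw [← H.2, zeroT_at_nxt]⟩),
          zero_mul]
    rw [Finset.sum_congr rfl (fun z _ => lhs z), Finset.sum_congr rfl (fun z _ => rhs z)]
    rw [sum_pinned v hn (fun w => X (zeroT v x) w * Y w (zeroT v y)) (x v) (x (nxt v)),
      sum_pinned v hn (fun w => X (zeroT v x) w * Y w (zeroT v y)) 0 0]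
  · rw [if_neg hc, Matrix.mul_apply]
    apply Finset.sum_eq_zero
    intro z _
    rcases not_and_or.mp hc with hne | hne
    · by_cases hz : z v = x v
      · rw [hY z y, if_neg (fun H => hne (hz ▸ H.1)), mul_zero]
      · rw [hX x z, if_neg (fun H => hz H.1.symm), zero_mul]
    · by_cases hz : z (nxt v) = x (nxt v)
      · rw [hY z y, if_neg (fun H => hne (hz ▸ H.2)), mul_zero]
      · rw [hX x z, if_neg (fun H => hz H.2.symm), zero_mul]

lemma away_twoSite {n : ℕ} (v j : Fin n)
    (g : Matrix (Fin 2 × Fin 2) (Fin 2 × Fin 2) ℂ)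
    (h1 : j ≠ v) (h2 : j ≠ nxt v) (h3 : nxt j ≠ v) (h4 : nxt j ≠ nxt v) :
    Away v (twoSite n j g) := by
  intro x y
  by_cases hc : x v = y v ∧ x (nxt v) = y (nxt v)
  · rw [if_pos hc]
    simp only [twoSite]
    have hcond : (∀ k : Fin n, k ≠ j → k ≠ nxt j → x k = y k)
        ↔ (∀ k : Fin n, k ≠ j → k ≠ nxt j → zeroT v x k = zeroT v y k) := by
      constructor
      · intro H k hk1 hk2
        by_cases hv1 : k = v
        · subst hv1; rw [zeroT_at_v, zeroT_at_v]
        · by_cases hv2 : k = nxt v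
          · subst hv2; rw [zeroT_at_nxt, zeroT_at_nxt]
          · rw [zeroT_other v x k hv1 hv2, zeroT_other v y k hv1 hv2]; exact H k hk1 hk2
      · intro H k hk1 hk2
        by_cases hv1 : k = v
        · subst hv1; exact hc.1
        · by_cases hv2 : k = nxt v
          · subst hv2; exact hc.2
          · have := H k hk1 hk2
            rwa [zeroT_other v x k hv1 hv2, zeroT_other v y k hv1 hv2] at this
    by_cases hcc : ∀ k : Fin n, k ≠ j → k ≠ nxt j → x k = y k
    · rw [if_pos hcc, if_pos (hcond.mp hcc), zeroT_other v x j h1 h2,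
        zeroT_other v x (nxt j) h3 h4, zeroT_other v y j h1 h2, zeroT_other v y (nxt j) h3 h4]
    · rw [if_neg hcc, if_neg (fun H => hcc (hcond.mpr H))]
  · rw [if_neg hc]
    simp only [twoSite]
    rw [if_neg]
    intro H
    exact hc ⟨H v (Ne.symm h1) (Ne.symm h3), H (nxt v) (Ne.symm h2) (Ne.symm h4)⟩

lemma trace_twoSite_mul_away {n : ℕ} (hn : 2 ≤ n) (v : Fin n)
    {g : Matrix (Fin 2 × Fin 2) (Fin 2 × Fin 2) ℂ} (htr : g.trace = 0)
    {X : Matrix (Cfg n) (Cfg n) ℂ} (hX : Away v X) :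
    (twoSite n v g * X).trace = 0 := by
  have tr : (twoSite n v g * X).trace
      = ∑ x : Cfg n, ∑ y : Cfg n, twoSite n v g x y * X y x := by
    simp [Matrix.trace, Matrix.diag, Matrix.mul_apply]
  rw [tr]
  have diag : ∀ x : Cfg n, (∑ y : Cfg n, twoSite n v g x y * X y x)
      = g (x v, x (nxt v)) (x v, x (nxt v)) * X (zeroT v x) (zeroT v x) := by
    intro x
    rw [Finset.sum_eq_single x]
    · simp only [twoSite, implies_true, if_true]
      rw [hX x x, if_pos ⟨rfl, rfl⟩]
    · intro y _ hyx
      by_cases hcc : ∀ k : Fin n, k ≠ v → k ≠ nxt v → x k = y k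
      · rw [hX y x, if_neg, mul_zero]
        intro H
        apply hyx
        funext k
        by_cases hv1 : k = v
        · subst hv1; exact H.1
        · by_cases hv2 : k = nxt v
          · subst hv2; exact H.2
          · exact (hcc k hv1 hv2).symm
      · simp only [twoSite]
        rw [if_neg hcc, zero_mul]
    · intro hx; exact absurd (Finset.mem_univ x) hx
  rw [Finset.sum_congr rfl (fun x _ => diag x)]
  rw [← Equiv.sum_comp (siteEquiv n v hn).symm
    (fun x => g (x v, x (nxt v)) (x v, x (nxt v)) * X (zeroT v x) (zeroT v x))]
  rw [Fintype.sum_prod_type]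
  have : ∀ (p : Fin 2 × Fin 2) (r : Rsub n v → Fin 2),
      g ((siteEquiv n v hn).symm (p, r) v, (siteEquiv n v hn).symm (p, r) (nxt v))
          ((siteEquiv n v hn).symm (p, r) v, (siteEquiv n v hn).symm (p, r) (nxt v))
        * X (zeroT v ((siteEquiv n v hn).symm (p, r))) (zeroT v ((siteEquiv n v hn).symm (p, r)))
      = g p p * X ((siteEquiv n v hn).symm ((0, 0), r)) ((siteEquiv n v hn).symm ((0, 0), r)) := by
    intro p r
    rw [siteEquiv_symm_at_i, siteEquiv_symm_at_nxt, zeroT_symm v hn]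
  simp only [this]
  rw [← Finset.sum_mul_sum]
  have : (∑ p : Fin 2 × Fin 2, g p p) = g.trace := by simp [Matrix.trace, Matrix.diag]
  rw [this, htr, zero_mul]

/-! ### expansion of powers of the Hamiltonian -/

/-- the translation-invariant nearest-neighbor Hamiltonian generated by `h` -/
noncomputable def ham (h : Matrix (Fin 2 × Fin 2) (Fin 2 × Fin 2) ℂ) (n : ℕ) :
    Matrix (Cfg n) (Cfg n) ℂ :=
  ∑ i : Fin n, twoSite n i h

noncomputable def Wprod {n : ℕ} (h : Matrix (Fin 2 × Fin 2) (Fin 2 × Fin 2) ℂ)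
    {m : ℕ} (f : Fin m → Fin n) : Matrix (Cfg n) (Cfg n) ℂ :=
  (List.ofFn (fun k => twoSite n (f k) h)).prod

lemma Wprod_zero {n : ℕ} (h : Matrix (Fin 2 × Fin 2) (Fin 2 × Fin 2) ℂ)
    (f : Fin 0 → Fin n) : Wprod h f = 1 := by
  simp [Wprod]

lemma Wprod_succ {n m : ℕ} (h : Matrix (Fin 2 × Fin 2) (Fin 2 × Fin 2) ℂ)
    (f : Fin (m + 1) → Fin n) :
    Wprod h f = twoSite n (f 0) h * Wprod h (fun k => f k.succ) := by
  simp [Wprod, List.ofFn_succ]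

lemma ham_pow_expand (h : Matrix (Fin 2 × Fin 2) (Fin 2 × Fin 2) ℂ) (n : ℕ) (m : ℕ) :
    (ham h n) ^ m = ∑ f : Fin m → Fin n, Wprod h f := by
  induction m with
  | zero =>
    rw [pow_zero]
    have hc : (Finset.univ : Finset (Fin 0 → Fin n)).card = 1 := by simp
    rw [Finset.sum_congr rfl (fun f _ => Wprod_zero h f), Finset.sum_const, hc, one_smul]
  | succ m ih =>
    rw [pow_succ']
    rw [ih]
    rw [← Equiv.sum_comp (Fin.consEquiv (fun _ : Fin (m + 1) => Fin n)) (fun f => Wprod h f)]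
    rw [Fintype.sum_prod_type]
    have : ∀ (i : Fin n) (g : Fin m → Fin n),
        Wprod h ((Fin.consEquiv (fun _ : Fin (m + 1) => Fin n)) (i, g))
          = twoSite n i h * Wprod h g := by
      intro i g
      have he : (Fin.consEquiv (fun _ : Fin (m + 1) => Fin n)) (i, g) = Fin.cons i g := rfl
      rw [he, Wprod_succ, Fin.cons_zero]
      congr 1
    simp only [this]
    rw [ham, Finset.sum_mul]
    congr 1
    funext i
    rw [Finset.mul_sum]

lemma P_Wprod {n : ℕ} (h : Matrix (Fin 2 × Fin 2) (Fin 2 × Fin 2) ℂ)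
    (P : Matrix (Cfg n) (Cfg n) ℂ → Prop) (hP1 : P 1)
    (hPm : ∀ a b, P a → P b → P (a * b)) :
    ∀ {m' : ℕ} (f : Fin m' → Fin n), (∀ l, P (twoSite n (f l) h)) → P (Wprod h f) := by
  intro m'
  induction m' with
  | zero => intro f _; rw [Wprod_zero]; exact hP1
  | succ m' ih =>
    intro f hf
    rw [Wprod_succ]
    exact hPm _ _ (hf 0) (ih _ (fun l => hf l.succ))

lemma trace_Wprod_isolate {n : ℕ} (h : Matrix (Fin 2 × Fin 2) (Fin 2 × Fin 2) ℂ)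
    (P : Matrix (Cfg n) (Cfg n) ℂ → Prop) (hP1 : P 1)
    (hPm : ∀ a b, P a → P b → P (a * b)) :
    ∀ {m : ℕ} (f : Fin m → Fin n) (k : Fin m) (C : Matrix (Cfg n) (Cfg n) ℂ), P C →
      (∀ l, l ≠ k → P (twoSite n (f l) h)) →
      ∃ X, P X ∧ (Wprod h f * C).trace = (twoSite n (f k) h * X).trace := by
  intro m
  induction m with
  | zero => intro f k; exact k.elim0
  | succ m ih =>
    intro f k
    refine Fin.cases ?_ ?_ k
    · intro C hC hf
      refine ⟨Wprod h (fun l => f l.succ) * C,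
        hPm _ _ (P_Wprod h P hP1 hPm _ (fun l => hf l.succ (Fin.succ_ne_zero l))) hC, ?_⟩
      rw [Wprod_succ, mul_assoc]
    · intro k' C hC hf
      have h0 : (0 : Fin (m + 1)) ≠ k'.succ := (Fin.succ_ne_zero k').symm
      obtain ⟨X, hPX, hX⟩ := ih (fun l => f l.succ) k' (C * twoSite n (f 0) h)
        (hPm _ _ hC (hf 0 h0)) (fun l hl => hf l.succ (fun He => hl (Fin.succ_injective _ He)))
      refine ⟨X, hPX, ?_⟩
      rw [Wprod_succ, mul_assoc, Matrix.trace_mul_comm, mul_assoc]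
      exact hX

lemma trace_Wprod_eq_zero {n m : ℕ} (hn : 3 ≤ n)
    {h : Matrix (Fin 2 × Fin 2) (Fin 2 × Fin 2) ℂ} (htr : h.trace = 0)
    (f : Fin m → Fin n) (k : Fin m)
    (hiso : ∀ l, l ≠ k → f l ≠ f k ∧ f l ≠ nxt (f k) ∧ nxt (f l) ≠ f k ∧ nxt (f l) ≠ nxt (f k)) :
    (Wprod h f).trace = 0 := by
  have hn2 : 2 ≤ n := by omega
  obtain ⟨X, hPX, hX⟩ := trace_Wprod_isolate h (Away (f k)) (away_one (f k))
    (fun a b ha hb => away_mul (f k) hn2 ha hb) f k 1 (away_one (f k))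
    (fun l hl => away_twoSite (f k) (f l) h (hiso l hl).1 (hiso l hl).2.1
      (hiso l hl).2.2.1 (hiso l hl).2.2.2)
  rw [← mul_one (Wprod h f), hX]
  exact trace_twoSite_mul_away hn2 (f k) htr hPX

/-! ### operator norm facts -/

/-- the ℓ²→ℓ² operator norm of a matrix -/
noncomputable def opNorm {d : Type*} [Fintype d] [DecidableEq d] (X : Matrix d d ℂ) : ℝ :=
  ‖LinearMap.toContinuousLinearMap (Matrix.toEuclideanLin X)‖

section opNorm
variable {d : Type*} [Fintype d] [DecidableEq d]

lemma toEuclideanLin_apply' (X : Matrix d d ℂ) (ψ : EuclideanSpace ℂ d) (x : d) :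
    (Matrix.toEuclideanLin X ψ : EuclideanSpace ℂ d) x = ∑ y : d, X x y * ψ y := rfl

lemma opNorm_nonneg (X : Matrix d d ℂ) : 0 ≤ opNorm X := norm_nonneg _

lemma le_opNorm' (X : Matrix d d ℂ) (ψ : EuclideanSpace ℂ d) :
    ‖Matrix.toEuclideanLin X ψ‖ ≤ opNorm X * ‖ψ‖ :=
  (LinearMap.toContinuousLinearMap (Matrix.toEuclideanLin X)).le_opNorm ψ

lemma euclid_norm_sq (w : EuclideanSpace ℂ d) : ‖w‖ ^ 2 = ∑ x : d, ‖w x‖ ^ 2 := by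
  rw [EuclideanSpace.norm_eq, Real.sq_sqrt (by positivity)]

lemma coord_le_norm (w : EuclideanSpace ℂ d) (x : d) : ‖w x‖ ≤ ‖w‖ := by
  rw [EuclideanSpace.norm_eq]
  have h1 : ‖w x‖ = Real.sqrt (‖w x‖ ^ 2) := (Real.sqrt_sq (norm_nonneg _)).symm
  rw [h1]
  apply Real.sqrt_le_sqrt
  exact Finset.single_le_sum (f := fun y => ‖w y‖ ^ 2) (fun y _ => by positivity) (Finset.mem_univ x)

lemma opNorm_mul_le (A B : Matrix d d ℂ) : opNorm (A * B) ≤ opNorm A * opNorm B := by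
  have hcomp : LinearMap.toContinuousLinearMap (Matrix.toEuclideanLin (A * B))
      = (LinearMap.toContinuousLinearMap (Matrix.toEuclideanLin A)).comp
        (LinearMap.toContinuousLinearMap (Matrix.toEuclideanLin B)) := by
    refine ContinuousLinearMap.ext fun v => ?_
    show Matrix.toEuclideanLin (A * B) v = Matrix.toEuclideanLin A (Matrix.toEuclideanLin B v)
    simp only [Matrix.toEuclideanLin_apply]
    ext x
    simp [Matrix.mulVec_mulVec]
  rw [opNorm, hcomp]
  exact ContinuousLinearMap.opNorm_comp_le _ _

lemma opNorm_one_le : opNorm (1 : Matrix d d ℂ) ≤ 1 := by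
  have h1 : LinearMap.toContinuousLinearMap (Matrix.toEuclideanLin (1 : Matrix d d ℂ))
      = ContinuousLinearMap.id ℂ (EuclideanSpace ℂ d) := by
    refine ContinuousLinearMap.ext fun v => ?_
    show Matrix.toEuclideanLin (1 : Matrix d d ℂ) v = v
    simp [Matrix.toEuclideanLin_apply]
  rw [opNorm, h1]
  exact ContinuousLinearMap.norm_id_le

lemma norm_trace_le (X : Matrix d d ℂ) : ‖X.trace‖ ≤ (Fintype.card d : ℝ) * opNorm X := by
  have hdiag : ∀ x : d, ‖X x x‖ ≤ opNorm X := by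
    intro x
    have h1 : X x x = (Matrix.toEuclideanLin X (EuclideanSpace.single x 1) : EuclideanSpace ℂ d) x := by
      rw [toEuclideanLin_apply']
      rw [Finset.sum_eq_single x]
      · simp
      · intro y _ hy; simp [EuclideanSpace.single_apply, hy]
      · intro hx; exact absurd (Finset.mem_univ x) hx
    rw [h1]
    calc ‖(Matrix.toEuclideanLin X (EuclideanSpace.single x 1) : EuclideanSpace ℂ d) x‖
        ≤ ‖Matrix.toEuclideanLin X (EuclideanSpace.single x 1)‖ := coord_le_norm _ x
      _ ≤ opNorm X * ‖EuclideanSpace.single x (1:ℂ)‖ := le_opNorm' _ _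
      _ = opNorm X := by rw [EuclideanSpace.norm_single]; simp
  calc ‖X.trace‖ = ‖∑ x : d, X x x‖ := by rw [Matrix.trace]; rfl
    _ ≤ ∑ x : d, ‖X x x‖ := norm_sum_le _ _
    _ ≤ ∑ _x : d, opNorm X := Finset.sum_le_sum (fun x _ => hdiag x)
    _ = (Fintype.card d : ℝ) * opNorm X := by simp [Finset.sum_const, nsmul_eq_mul]

end opNorm

lemma opNorm_twoSite_le {n : ℕ} (hn : 2 ≤ n) (i : Fin n)
    (g : Matrix (Fin 2 × Fin 2) (Fin 2 × Fin 2) ℂ) :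
    opNorm (twoSite n i g) ≤ opNorm g := by
  rw [opNorm]
  apply ContinuousLinearMap.opNorm_le_bound _ (opNorm_nonneg g)
  intro ψ
  have key : ∀ (p : Fin 2 × Fin 2) (r : Rsub n i → Fin 2),
      (Matrix.toEuclideanLin (twoSite n i g) ψ : EuclideanSpace ℂ (Cfg n))
          ((siteEquiv n i hn).symm (p, r))
        = ∑ q : Fin 2 × Fin 2, g p q * ψ ((siteEquiv n i hn).symm (q, r)) := by
    intro p r
    rw [toEuclideanLin_apply']
    rw [← Equiv.sum_comp (siteEquiv n i hn).symm
      (fun y => twoSite n i g ((siteEquiv n i hn).symm (p, r)) y * ψ y)]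
    rw [Fintype.sum_prod_type]
    have : ∀ (q : Fin 2 × Fin 2) (s : Rsub n i → Fin 2),
        twoSite n i g ((siteEquiv n i hn).symm (p, r)) ((siteEquiv n i hn).symm (q, s))
            * ψ ((siteEquiv n i hn).symm (q, s))
          = if s = r then g p q * ψ ((siteEquiv n i hn).symm (q, s)) else 0 := by
      intro q s
      rw [twoSite_apply_symm i hn]
      by_cases hrs : r = s
      · rw [if_pos hrs, if_pos hrs.symm]
      · rw [if_neg hrs, if_neg (Ne.symm hrs), zero_mul]
    simp only [this]
    apply Finset.sum_congr rfl
    intro q _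
    rw [Finset.sum_ite_eq' Finset.univ r
      (fun s => g p q * ψ ((siteEquiv n i hn).symm (q, s)))]
    simp
  -- now square norms
  have hnn : (0:ℝ) ≤ opNorm g * ‖ψ‖ := mul_nonneg (opNorm_nonneg g) (norm_nonneg ψ)
  have hsq : ‖Matrix.toEuclideanLin (twoSite n i g) ψ‖ ^ 2 ≤ (opNorm g * ‖ψ‖) ^ 2 := by
    rw [euclid_norm_sq]
    rw [← Equiv.sum_comp (siteEquiv n i hn).symm
      (fun x => ‖(Matrix.toEuclideanLin (twoSite n i g) ψ : EuclideanSpace ℂ (Cfg n)) x‖ ^ 2)]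
    rw [Fintype.sum_prod_type, Finset.sum_comm]
    have hinner : ∀ r : Rsub n i → Fin 2,
        (∑ p : Fin 2 × Fin 2, ‖(Matrix.toEuclideanLin (twoSite n i g) ψ : EuclideanSpace ℂ (Cfg n))
            ((siteEquiv n i hn).symm (p, r))‖ ^ 2)
        ≤ (opNorm g)^2 * ∑ q : Fin 2 × Fin 2, ‖ψ ((siteEquiv n i hn).symm (q, r))‖ ^ 2 := by
      intro r
      set ψr : EuclideanSpace ℂ (Fin 2 × Fin 2) := WithLp.toLp 2 (fun q => ψ ((siteEquiv n i hn).symm (q, r)))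
        with hψr
      have h2 : ∀ p, (Matrix.toEuclideanLin (twoSite n i g) ψ : EuclideanSpace ℂ (Cfg n))
          ((siteEquiv n i hn).symm (p, r))
          = (Matrix.toEuclideanLin g ψr : EuclideanSpace ℂ (Fin 2 × Fin 2)) p := by
        intro p
        rw [key p r, toEuclideanLin_apply']
      simp only [h2]
      have h3 : (∑ p : Fin 2 × Fin 2,
          ‖(Matrix.toEuclideanLin g ψr : EuclideanSpace ℂ (Fin 2 × Fin 2)) p‖ ^ 2)
          = ‖Matrix.toEuclideanLin g ψr‖ ^ 2 := (euclid_norm_sq _).symm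
      rw [h3]
      have h4 : ‖Matrix.toEuclideanLin g ψr‖ ^ 2 ≤ (opNorm g * ‖ψr‖) ^ 2 := by
        apply pow_le_pow_left₀ (norm_nonneg _) (le_opNorm' g ψr)
      calc ‖Matrix.toEuclideanLin g ψr‖ ^ 2 ≤ (opNorm g * ‖ψr‖) ^ 2 := h4
        _ = (opNorm g)^2 * ‖ψr‖^2 := by ring
        _ = (opNorm g)^2 * ∑ q : Fin 2 × Fin 2, ‖ψr q‖ ^ 2 := by rw [euclid_norm_sq]
        _ = (opNorm g)^2 * ∑ q : Fin 2 × Fin 2, ‖ψ ((siteEquiv n i hn).symm (q, r))‖ ^ 2 := rfl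
    calc (∑ r : Rsub n i → Fin 2, ∑ p : Fin 2 × Fin 2,
          ‖(Matrix.toEuclideanLin (twoSite n i g) ψ : EuclideanSpace ℂ (Cfg n))
            ((siteEquiv n i hn).symm (p, r))‖ ^ 2)
        ≤ ∑ r : Rsub n i → Fin 2,
            (opNorm g)^2 * ∑ q : Fin 2 × Fin 2, ‖ψ ((siteEquiv n i hn).symm (q, r))‖ ^ 2 :=
          Finset.sum_le_sum (fun r _ => hinner r)
      _ = (opNorm g)^2 * ∑ r : Rsub n i → Fin 2,
            ∑ q : Fin 2 × Fin 2, ‖ψ ((siteEquiv n i hn).symm (q, r))‖ ^ 2 := by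
          rw [Finset.mul_sum]
      _ = (opNorm g)^2 * ‖ψ‖^2 := by
          congr 1
          rw [euclid_norm_sq]
          rw [← Equiv.sum_comp (siteEquiv n i hn).symm (fun x => ‖ψ x‖ ^ 2)]
          rw [Fintype.sum_prod_type, Finset.sum_comm]
      _ = (opNorm g * ‖ψ‖) ^ 2 := by ring
  have := Real.sqrt_le_sqrt hsq
  rwa [Real.sqrt_sq (norm_nonneg _), Real.sqrt_sq hnn] at this

/-! ### cyclic proximity combinatorics -/

def cyc {n : ℕ} (v : Fin n) : ZMod n := (v.1 : ZMod n)

def near {n : ℕ} (s : ℕ) (a b : ZMod n) : Prop :=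
  ∃ t : ℕ, t ≤ s ∧ (a + t = b ∨ b + t = a)

lemma near_symm {n : ℕ} {s : ℕ} {a b : ZMod n} (h : near s a b) : near s b a := by
  obtain ⟨t, ht, hc⟩ := h
  exact ⟨t, ht, hc.symm⟩

lemma near_mono {n : ℕ} {s s' : ℕ} (hss : s ≤ s') {a b : ZMod n} (h : near s a b) :
    near s' a b := by
  obtain ⟨t, ht, hc⟩ := h
  exact ⟨t, le_trans ht hss, hc⟩

lemma near_trans {n : ℕ} {s s' : ℕ} {a b c : ZMod n} (h1 : near s a b) (h2 : near s' b c) :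
    near (s + s') a c := by
  obtain ⟨t, ht, hc1⟩ := h1
  obtain ⟨u, hu, hc2⟩ := h2
  rcases hc1 with h1' | h1' <;> rcases hc2 with h2' | h2'
  · exact ⟨t + u, by omega, Or.inl (by push_cast; linear_combination h1' + h2')⟩
  · rcases Nat.le_total u t with htu | htu
    · exact ⟨t - u, by omega, Or.inl (by rw [Nat.cast_sub htu]; linear_combination h1' - h2')⟩
    · exact ⟨u - t, by omega, Or.inr (by rw [Nat.cast_sub htu]; linear_combination h2' - h1')⟩
  · rcases Nat.le_total u t with htu | htu
    · exact ⟨t - u, by omega, Or.inr (by rw [Nat.cast_sub htu]; linear_combination h1' - h2')⟩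
    · exact ⟨u - t, by omega, Or.inl (by rw [Nat.cast_sub htu]; linear_combination h2' - h1')⟩
  · exact ⟨t + u, by omega, Or.inr (by push_cast; linear_combination h1' + h2')⟩

lemma cyc_injective {n : ℕ} (hn : 0 < n) : Function.Injective (cyc : Fin n → ZMod n) := by
  intro a b hab
  have h2 : ((a.1 : ZMod n)).val = ((b.1 : ZMod n)).val := congrArg ZMod.val hab
  rw [ZMod.val_natCast_of_lt a.2, ZMod.val_natCast_of_lt b.2] at h2
  exact Fin.ext h2

lemma cyc_nxt {n : ℕ} (v : Fin n) : cyc (nxt v) = cyc v + 1 := by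
  unfold cyc nxt
  show (((v.1 + 1) % n : ℕ) : ZMod n) = _
  rw [ZMod.natCast_mod]
  push_cast
  ring

section comb
variable {n m : ℕ}

/-- every factor in the product has a (cyclically) adjacent or equal companion -/
def goodf (f : Fin m → Fin n) : Prop :=
  ∀ k : Fin m, ∃ l : Fin m, l ≠ k ∧ near 1 (cyc (f k)) (cyc (f l))

lemma trace_Wprod_eq_zero_of_not_good {h : Matrix (Fin 2 × Fin 2) (Fin 2 × Fin 2) ℂ}
    (hn : 3 ≤ n) (htr : h.trace = 0) (f : Fin m → Fin n) (hf : ¬ goodf f) :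
    (Wprod h f).trace = 0 := by
  rw [goodf] at hf
  push_neg at hf
  obtain ⟨k, hk⟩ := hf
  have hpos : 0 < n := by omega
  apply trace_Wprod_eq_zero hn htr f k
  intro l hl
  have hnear := hk l hl
  refine ⟨?_, ?_, ?_, ?_⟩
  · intro He
    exact hnear ⟨0, by omega, Or.inl (by rw [He]; push_cast; ring)⟩
  · intro He
    exact hnear ⟨1, le_refl 1, Or.inl (by rw [He, cyc_nxt]; push_cast; ring)⟩
  · intro He
    exact hnear ⟨1, le_refl 1, Or.inr (by rw [← He, cyc_nxt]; push_cast; ring)⟩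
  · intro He
    have : cyc (f l) + 1 = cyc (f k) + 1 := by rw [← cyc_nxt, ← cyc_nxt, He]
    have heq : cyc (f l) = cyc (f k) := by linear_combination this
    exact hnear ⟨0, by omega, Or.inl (by rw [heq]; push_cast; ring)⟩

/-- a slot is fresh if its site is cyclically far from all earlier slots' sites -/
def freshf (f : Fin m → Fin n) (k : Fin m) : Prop :=
  ∀ l : Fin m, l < k → ¬ near m (cyc (f l)) (cyc (f k))

noncomputable def freshSet (f : Fin m → Fin n) : Finset (Fin m) :=
  Finset.univ.filter (freshf f)

lemma freshSet_card (hm2 : 2 ≤ m) (f : Fin m → Fin n) (hgood : goodf f) :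
    2 * (freshSet f).card ≤ m := by
  classical
  have hcomp : ∀ k ∈ freshSet f, ∃ l : Fin m, l ∉ freshSet f ∧ l ≠ k ∧
      near 1 (cyc (f k)) (cyc (f l)) := by
    intro k hk
    obtain ⟨l, hl, hnear⟩ := hgood k
    refine ⟨l, ?_, hl, hnear⟩
    intro hlF
    have hkfresh : freshf f k := (Finset.mem_filter.mp hk).2
    have hlfresh : freshf f l := (Finset.mem_filter.mp hlF).2
    rcases lt_or_gt_of_ne hl with hlt | hlt
    · exact hkfresh l hlt (near_mono (by omega) (near_symm hnear))
    · exact hlfresh k hlt (near_mono (by omega) hnear)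
  -- choose companions
  choose comp hcomp1 hcomp2 hcomp3 using hcomp
  have hinj : ∀ (k1 : Fin m) (hk1 : k1 ∈ freshSet f) (k2 : Fin m) (hk2 : k2 ∈ freshSet f),
      comp k1 hk1 = comp k2 hk2 → k1 = k2 := by
    intro k1 hk1 k2 hk2 hc
    by_contra hne
    have hn1 := hcomp3 k1 hk1
    have hn2 := hcomp3 k2 hk2
    rw [hc] at hn1
    have h12 : near 2 (cyc (f k1)) (cyc (f k2)) := near_trans hn1 (near_symm hn2)
    rcases lt_or_gt_of_ne hne with hlt | hlt
    · exact (Finset.mem_filter.mp hk2).2 k1 hlt (near_mono (by omega) h12)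
    · exact (Finset.mem_filter.mp hk1).2 k2 hlt (near_mono (by omega) (near_symm h12))
  have hcard : (freshSet f).card ≤ (Finset.univ \ freshSet f).card := by
    apply Finset.card_le_card_of_injOn (fun k => if hk : k ∈ freshSet f then comp k hk else k)
    · intro k hk
      simp only [Finset.mem_coe] at hk; simp only [dif_pos hk]
      exact Finset.mem_sdiff.mpr ⟨Finset.mem_univ _, hcomp1 k hk⟩
    · intro k1 hk1 k2 hk2 hc
      have hk1' : k1 ∈ freshSet f := hk1
      have hk2' : k2 ∈ freshSet f := hk2
      simp only at hc
      rw [dif_pos hk1', dif_pos hk2'] at hc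
      exact hinj k1 hk1' k2 hk2' hc
  have h1 : (Finset.univ \ freshSet f).card = m - (freshSet f).card := by
    rw [Finset.card_sdiff_of_subset (Finset.subset_univ _)]
    simp
  have h2 : (freshSet f).card ≤ m := by
    calc (freshSet f).card ≤ (Finset.univ : Finset (Fin m)).card := Finset.card_le_card (Finset.subset_univ _)
      _ = m := by simp
  omega
end comb

section encode
variable {n m : ℕ}

def Exf (f : Fin m → Fin n) (k : Fin m) : Prop :=
  ∃ q : Fin m × Fin (2 * m + 1), q.1 < k ∧
    cyc (f k) = cyc (f q.1) + (q.2.1 : ZMod n) - (m : ZMod n)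

noncomputable def vMap (f : Fin m → Fin n) : Fin m → Option (Fin n) :=
  fun k => if freshf f k then some (f k) else none

noncomputable def ptrMap (hm : 0 < m) (f : Fin m → Fin n) : Fin m → Fin m × Fin (2 * m + 1) :=
  fun k => if hk : Exf f k then Classical.choose hk else (⟨0, hm⟩, ⟨0, by omega⟩)

lemma nonfresh_Exf (f : Fin m → Fin n) (k : Fin m) (hk : ¬ freshf f k) : Exf f k := by
  rw [freshf] at hk
  push_neg at hk
  obtain ⟨l, hlk, hnear⟩ := hk
  obtain ⟨t, ht, hc⟩ := hnear
  rcases hc with hc | hc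
  · refine ⟨(l, ⟨m + t, by omega⟩), hlk, ?_⟩
    push_cast
    linear_combination -hc
  · refine ⟨(l, ⟨m - t, by omega⟩), hlk, ?_⟩
    show cyc (f k) = cyc (f l) + ((m - t : ℕ) : ZMod n) - (m : ZMod n)
    rw [Nat.cast_sub ht]
    linear_combination hc

lemma encode_inj (hn : 0 < n) (hm : 0 < m) (f g : Fin m → Fin n)
    (hv : vMap f = vMap g) (hp : ptrMap hm f = ptrMap hm g) : f = g := by
  have main : ∀ N : ℕ, ∀ k : Fin m, k.1 < N → f k = g k := by
    intro N
    induction N with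
    | zero => intro k hk; omega
    | succ N ih =>
      intro k hkN
      by_cases hfr : freshf f k
      · have hv' := congrFun hv k
        simp only [vMap] at hv'
        simp only [if_pos hfr] at hv'
        by_cases hfrg : freshf g k
        · simp only [if_pos hfrg] at hv'
          exact Option.some_injective _ hv'
        · simp only [if_neg hfrg] at hv'
          exact absurd hv' (Option.some_ne_none _)
      · have hfrg : ¬ freshf g k := by
          intro hc
          have hv' := congrFun hv k
          simp only [vMap] at hv'
          simp only [if_neg hfr, if_pos hc] at hv'
          exact absurd hv'.symm (Option.some_ne_none _)
        have hEf := nonfresh_Exf f k hfr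
        have hEg := nonfresh_Exf g k hfrg
        have hpf := congrFun hp k
        simp only [ptrMap] at hpf
        simp only [dif_pos hEf, dif_pos hEg] at hpf
        obtain ⟨h1f, h2f⟩ := Classical.choose_spec hEf
        obtain ⟨h1g, h2g⟩ := Classical.choose_spec hEg
        rw [hpf] at h1f h2f
        have hrec : f (Classical.choose hEg).1 = g (Classical.choose hEg).1 := by
          apply ih
          have := h1g
          omega
        apply cyc_injective hn
        rw [hrec] at h2f
        exact h2f.trans h2g.symm
  funext k
  exact main (k.1 + 1) k (Nat.lt_succ_self _)

lemma good_card_bound (hn : 0 < n) (hm2 : 2 ≤ m) :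
    ((Finset.univ.filter (goodf : (Fin m → Fin n) → Prop)).card : ℕ)
      ≤ 2 ^ m * (n + 1) ^ (m / 2) * (m * (2 * m + 1)) ^ m := by
  classical
  have hm : 0 < m := by omega
  set T : Finset ((Fin m → Option (Fin n)) × (Fin m → Fin m × Fin (2 * m + 1))) :=
    (Finset.univ.powerset.filter (fun F : Finset (Fin m) => F.card ≤ m / 2)).biUnion
      (fun F => (Fintype.piFinset (fun k => if k ∈ F then (Finset.univ : Finset (Option (Fin n)))
        else ({none} : Finset (Option (Fin n)))))
        ×ˢ (Finset.univ : Finset (Fin m → Fin m × Fin (2 * m + 1)))) with hT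
  have hmap : ∀ f ∈ Finset.univ.filter (goodf : (Fin m → Fin n) → Prop),
      (vMap f, ptrMap hm f) ∈ T := by
    intro f hf
    have hgood : goodf f := (Finset.mem_filter.mp hf).2
    rw [hT]
    apply Finset.mem_biUnion.mpr
    refine ⟨freshSet f, ?_, ?_⟩
    · apply Finset.mem_filter.mpr
      refine ⟨Finset.mem_powerset.mpr (Finset.subset_univ _), ?_⟩
      have := freshSet_card hm2 f hgood
      omega
    · apply Finset.mem_product.mpr
      constructor
      · apply Fintype.mem_piFinset.mpr
        intro k
        by_cases hk : k ∈ freshSet f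
        · rw [if_pos hk]; exact Finset.mem_univ _
        · rw [if_neg hk]
          have hnf : ¬ freshf f k := by
            intro hc; exact hk (Finset.mem_filter.mpr ⟨Finset.mem_univ _, hc⟩)
          simp only [vMap, if_neg hnf]
          exact Finset.mem_singleton_self _
      · exact Finset.mem_univ _
  have hinj : ∀ f ∈ Finset.univ.filter (goodf : (Fin m → Fin n) → Prop),
      ∀ g ∈ Finset.univ.filter (goodf : (Fin m → Fin n) → Prop),
      (vMap f, ptrMap hm f) = (vMap g, ptrMap hm g) → f = g := by
    intro f _ g _ hfg
    exact encode_inj hn hm f g (congrArg Prod.fst hfg) (congrArg Prod.snd hfg)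
  have hle : (Finset.univ.filter (goodf : (Fin m → Fin n) → Prop)).card ≤ T.card :=
    Finset.card_le_card_of_injOn _ hmap hinj
  have hTle : T.card ≤ 2 ^ m * (n + 1) ^ (m / 2) * (m * (2 * m + 1)) ^ m := by
    rw [hT]
    calc ((Finset.univ.powerset.filter (fun F : Finset (Fin m) => F.card ≤ m / 2)).biUnion _).card
        ≤ ∑ F ∈ Finset.univ.powerset.filter (fun F : Finset (Fin m) => F.card ≤ m / 2),
          ((Fintype.piFinset (fun k => if k ∈ F then (Finset.univ : Finset (Option (Fin n)))
            else ({none} : Finset (Option (Fin n)))))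
            ×ˢ (Finset.univ : Finset (Fin m → Fin m × Fin (2 * m + 1)))).card :=
          Finset.card_biUnion_le
      _ ≤ ∑ _F ∈ Finset.univ.powerset.filter (fun F : Finset (Fin m) => F.card ≤ m / 2),
          (n + 1) ^ (m / 2) * (m * (2 * m + 1)) ^ m := by
          apply Finset.sum_le_sum
          intro F hF
          rw [Finset.card_product, Fintype.card_piFinset]
          have hprod : (∏ k : Fin m, ((if k ∈ F then (Finset.univ : Finset (Option (Fin n)))
              else ({none} : Finset (Option (Fin n)))).card))
              = (n + 1) ^ F.card := by
            have : ∀ k : Fin m, ((if k ∈ F then (Finset.univ : Finset (Option (Fin n)))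
                else ({none} : Finset (Option (Fin n)))).card)
                = if k ∈ F then (n + 1) else 1 := by
              intro k
              by_cases hk : k ∈ F
              · rw [if_pos hk, if_pos hk]
                simp [Fintype.card_option]
              · rw [if_neg hk, if_neg hk, Finset.card_singleton]
            rw [Finset.prod_congr rfl (fun k _ => this k)]
            rw [Finset.prod_ite_mem Finset.univ F (fun _ => n + 1)]
            rw [Finset.univ_inter, Finset.prod_const]
          rw [hprod]
          have hFc : F.card ≤ m / 2 := (Finset.mem_filter.mp hF).2
          have hcardQ : (Finset.univ : Finset (Fin m → Fin m × Fin (2 * m + 1))).card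
              = (m * (2 * m + 1)) ^ m := by
            rw [Finset.card_univ, Fintype.card_fun]
            simp [Fintype.card_prod]
          rw [hcardQ]
          apply Nat.mul_le_mul_right
          exact Nat.pow_le_pow_right (by omega) hFc |>.trans
            (Nat.pow_le_pow_left (le_refl _) _) |>.trans (le_refl _)
      _ ≤ 2 ^ m * ((n + 1) ^ (m / 2) * (m * (2 * m + 1)) ^ m) := by
          rw [Finset.sum_const, smul_eq_mul]
          apply Nat.mul_le_mul_right
          calc (Finset.univ.powerset.filter (fun F : Finset (Fin m) => F.card ≤ m / 2)).card
              ≤ (Finset.univ : Finset (Fin m)).powerset.card :=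
                Finset.card_le_card (Finset.filter_subset _ _)
            _ = 2 ^ m := by rw [Finset.card_powerset]; simp
      _ = 2 ^ m * (n + 1) ^ (m / 2) * (m * (2 * m + 1)) ^ m := by ring
  omega
end encode

/-! ### spectral facts -/

lemma opNorm_Wprod_le {n : ℕ} (hn : 2 ≤ n) {h : Matrix (Fin 2 × Fin 2) (Fin 2 × Fin 2) ℂ}
    (hnorm : opNorm h ≤ 1) : ∀ {m : ℕ} (f : Fin m → Fin n), opNorm (Wprod h f) ≤ 1 := by
  intro m
  induction m with
  | zero => intro f; rw [Wprod_zero]; exact opNorm_one_le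
  | succ m ih =>
    intro f
    rw [Wprod_succ]
    calc opNorm (twoSite n (f 0) h * Wprod h (fun k => f k.succ))
        ≤ opNorm (twoSite n (f 0) h) * opNorm (Wprod h (fun k => f k.succ)) := opNorm_mul_le _ _
      _ ≤ 1 * 1 := mul_le_mul ((opNorm_twoSite_le hn (f 0) h).trans hnorm) (ih _)
            (opNorm_nonneg _) zero_le_one
      _ = 1 := one_mul 1

lemma ham_isHermitian {n : ℕ} {h : Matrix (Fin 2 × Fin 2) (Fin 2 × Fin 2) ℂ}
    (hherm : h.IsHermitian) : (ham h n).IsHermitian := by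
  rw [ham, Matrix.IsHermitian, Matrix.conjTranspose_sum]
  exact Finset.sum_congr rfl (fun i _ => twoSite_isHermitian i hherm)

lemma trace_pow_eq_sum_eigs {d : Type*} [Fintype d] [DecidableEq d] {A : Matrix d d ℂ}
    (hA : A.IsHermitian) (k : ℕ) :
    (A ^ k).trace = ∑ x : d, ((hA.eigenvalues x : ℝ) : ℂ) ^ k := by
  set U : Matrix d d ℂ := (hA.eigenvectorUnitary : Matrix d d ℂ) with hU
  set D : Matrix d d ℂ := Matrix.diagonal (RCLike.ofReal ∘ hA.eigenvalues) with hD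
  have hU1 : U * star U = 1 := Matrix.mem_unitaryGroup_iff.mp hA.eigenvectorUnitary.2
  have hU2 : star U * U = 1 := by
    exact (Unitary.mem_iff.mp hA.eigenvectorUnitary.2).1
  have hpow : ∀ j : ℕ, A ^ j = U * D ^ j * star U := by
    intro j
    induction j with
    | zero => rw [pow_zero, pow_zero, mul_one, hU1]
    | succ j ih =>
      rw [pow_succ, ih, hA.spectral_theorem]
      simp only [Unitary.conjStarAlgAut_apply, Unitary.coe_star]
      rw [← hU, ← hD]
      have hmid : U * D ^ j * star U * (U * D * star U) = U * D ^ j * (star U * U) * D * star U := by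
        noncomm_ring
      rw [hmid, hU2, mul_one, pow_succ]
      noncomm_ring
  rw [hpow k, Matrix.trace_mul_comm, ← mul_assoc, hU2, one_mul]
  rw [hD, Matrix.diagonal_pow, Matrix.trace_diagonal]
  apply Finset.sum_congr rfl
  intro x _
  simp [Pi.pow_apply]

lemma trace_hh_pos {h : Matrix (Fin 2 × Fin 2) (Fin 2 × Fin 2) ℂ}
    (hherm : h.IsHermitian) (hne : h ≠ 0) :
    ∃ a : ℝ, 0 < a ∧ (h * h).trace = (a : ℂ) := by
  refine ⟨∑ p : Fin 2 × Fin 2, ∑ q : Fin 2 × Fin 2, Complex.normSq (h p q), ?_, ?_⟩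
  · have hex : ∃ p q : Fin 2 × Fin 2, h p q ≠ 0 := by
      by_contra hc
      push_neg at hc
      exact hne (Matrix.ext (fun p q => hc p q))
    obtain ⟨p0, q0, hpq⟩ := hex
    have : 0 < ∑ q : Fin 2 × Fin 2, Complex.normSq (h p0 q) := by
      apply Finset.sum_pos' (fun q _ => Complex.normSq_nonneg _)
      exact ⟨q0, Finset.mem_univ _, Complex.normSq_pos.mpr hpq⟩
    apply Finset.sum_pos' (fun p _ => Finset.sum_nonneg (fun q _ => Complex.normSq_nonneg _))
    exact ⟨p0, Finset.mem_univ _, this⟩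
  · have htr : (h * h).trace = ∑ p : Fin 2 × Fin 2, ∑ q : Fin 2 × Fin 2, h p q * h q p := by
      simp [Matrix.trace, Matrix.diag, Matrix.mul_apply]
    rw [htr]
    push_cast
    apply Finset.sum_congr rfl
    intro p _
    apply Finset.sum_congr rfl
    intro q _
    have hqp : h q p = star (h p q) := by rw [← hherm.apply p q]; exact (star_star _).symm
    rw [hqp]
    rw [show star (h p q) = (starRingEnd ℂ) (h p q) from rfl, Complex.mul_conj]

lemma trace_ham_sq {n : ℕ} (hn : 3 ≤ n) {h : Matrix (Fin 2 × Fin 2) (Fin 2 × Fin 2) ℂ}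
    (horth : ∀ i j : Fin n, i ≠ j → (twoSite n i h * twoSite n j h).trace = 0) :
    ((ham h n) ^ 2).trace = (n : ℂ) * 2 ^ (n - 2) * (h * h).trace := by
  have hn2 : 2 ≤ n := by omega
  rw [pow_two, ham, Finset.sum_mul_sum]
  rw [Matrix.trace_sum]
  have : ∀ i : Fin n, (∑ j : Fin n, twoSite n i h * twoSite n j h).trace
      = 2 ^ (n - 2) * (h * h).trace := by
    intro i
    rw [Matrix.trace_sum]
    rw [Finset.sum_eq_single i]
    · exact trace_twoSite_mul hn2 i h h
    · intro j _ hji; exact horth i j (Ne.symm hji)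
    · intro hi; exact absurd (Finset.mem_univ i) hi
  rw [Finset.sum_congr rfl (fun i _ => this i), Finset.sum_const, Finset.card_univ,
    Fintype.card_fin, nsmul_eq_mul]
  ring

theorem stmt7 (h : Matrix (Fin 2 × Fin 2) (Fin 2 × Fin 2) ℂ)
    (hherm : h.IsHermitian) (htr : h.trace = 0) (hne : h ≠ 0) (hnorm : opNorm h ≤ 1)
    (horth : ∀ n : ℕ, 3 ≤ n → ∀ i j : Fin n, i ≠ j →
      (twoSite n i h * twoSite n j h).trace = 0) :
    ∀ m : ℕ, Even m → 0 < m →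
      ∃ c C : ℝ, 0 < c ∧ 0 < C ∧ ∀ n : ℕ, 3 ≤ n →
        ((c * (n : ℝ) ^ (m / 2) : ℝ) : ℂ) ≤ ((ham h n) ^ m).trace / 2 ^ n ∧
        ((ham h n) ^ m).trace / 2 ^ n ≤ ((C * (n : ℝ) ^ (m / 2) : ℝ) : ℂ) := by
  intro m hme hmpos
  obtain ⟨r, hr⟩ := hme
  have hm2 : 2 ≤ m := by omega
  have hmr : m / 2 = r := by omega
  have hr1 : 1 ≤ r := by omega
  obtain ⟨a, ha, htrhh⟩ := trace_hh_pos hherm hne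
  refine ⟨(a / 4) ^ (m / 2),
    (2:ℝ) ^ m * 2 ^ (m / 2) * (((m * (2 * m + 1)) ^ m : ℕ) : ℝ) + 1, by positivity,
    by positivity, ?_⟩
  intro n hn
  have hn2 : 2 ≤ n := by omega
  have hn0 : 0 < n := by omega
  have hH : (ham h n).IsHermitian := ham_isHermitian hherm
  set eig := hH.eigenvalues with heig
  set t : ℝ := ∑ x : Cfg n, eig x ^ m with ht
  set s2 : ℝ := ∑ x : Cfg n, eig x ^ 2 with hs2
  have htrm : ((ham h n) ^ m).trace = ((t : ℝ) : ℂ) := by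
    rw [trace_pow_eq_sum_eigs hH m, ht]; push_cast; rfl
  have htr2C : ((s2 : ℝ) : ℂ) = ((((n : ℝ) * 2 ^ (n - 2) * a : ℝ)) : ℂ) := by
    rw [hs2]
    have e1 : ((∑ x : Cfg n, eig x ^ 2 : ℝ) : ℂ) = ((ham h n) ^ 2).trace := by
      rw [trace_pow_eq_sum_eigs hH 2]; push_cast; rfl
    rw [e1, trace_ham_sq hn (horth n hn), htrhh]
    push_cast; ring
  have htr2 : s2 = (n : ℝ) * 2 ^ (n - 2) * a := Complex.ofReal_inj.mp htr2C
  have hd : (0:ℝ) < 2 ^ n := by positivity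
  have hgoal : ((ham h n) ^ m).trace / 2 ^ n = (((t / 2 ^ n : ℝ)) : ℂ) := by
    rw [htrm, Complex.ofReal_div]
    norm_num
  rw [hgoal]
  have hs2d : s2 / 2 ^ n = (n : ℝ) * a / 4 := by
    have h4 : (2:ℝ) ^ n = 2 ^ (n - 2) * 4 := by
      have : n - 2 + 2 = n := by omega
      rw [← this, pow_add]; norm_num
    rw [htr2, h4]
    have h42 : (0:ℝ) < 2 ^ (n-2) := by positivity
    field_simp
  constructor
  · -- lower bound
    rw [Complex.real_le_real]
    have jensen := pow_sum_div_card_le_sum_pow (s := (Finset.univ : Finset (Cfg n)))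
      (f := fun x => eig x ^ 2) (fun x _ => by positivity) (m / 2 - 1)
    have hex : m / 2 - 1 + 1 = m / 2 := by omega
    rw [hex] at jensen
    have hcard : ((Finset.univ : Finset (Cfg n)).card : ℝ) = 2 ^ n := by
      rw [Finset.card_univ, card_Cfg]; push_cast; ring
    have hpm : ∀ x : Cfg n, (eig x ^ 2) ^ (m / 2) = eig x ^ m := by
      intro x
      rw [← pow_mul]
      congr 1
      omega
    rw [Finset.sum_congr rfl (fun x _ => hpm x)] at jensen
    rw [hcard] at jensen
    -- jensen : s2 ^ (m/2) / (2^n)^(m/2 - 1) ≤ t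
    have key : s2 ^ (m / 2) / (2 ^ n : ℝ) ^ (m / 2) ≤ t / 2 ^ n := by
      have hpow : ((2:ℝ) ^ n) ^ (m / 2) = ((2:ℝ) ^ n) ^ (m / 2 - 1) * 2 ^ n := by
        rw [← pow_succ]
        congr 1
        omega
      rw [hpow, ← div_div]
      exact div_le_div_of_nonneg_right jensen hd.le
    calc (a / 4) ^ (m / 2) * (n : ℝ) ^ (m / 2)
        = (s2 / 2 ^ n) ^ (m / 2) := by rw [hs2d, ← mul_pow]; congr 1; ring
      _ = s2 ^ (m / 2) / (2 ^ n : ℝ) ^ (m / 2) := div_pow _ _ _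
      _ ≤ t / 2 ^ n := key
  · -- upper bound
    rw [Complex.real_le_real]
    have hexp : ((ham h n) ^ m).trace
        = ∑ f ∈ Finset.univ.filter (goodf : (Fin m → Fin n) → Prop), (Wprod h f).trace := by
      rw [ham_pow_expand h n m, Matrix.trace_sum]
      exact (Finset.sum_subset (Finset.filter_subset _ _)
        (fun f _ hf => trace_Wprod_eq_zero_of_not_good hn htr f
          (fun hg => hf (Finset.mem_filter.mpr ⟨Finset.mem_univ _, hg⟩)))).symm
    have hbound : ‖((ham h n) ^ m).trace‖
        ≤ ((Finset.univ.filter (goodf : (Fin m → Fin n) → Prop)).card : ℝ) * 2 ^ n := by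
      rw [hexp]
      calc ‖∑ f ∈ Finset.univ.filter (goodf : (Fin m → Fin n) → Prop), (Wprod h f).trace‖
          ≤ ∑ f ∈ Finset.univ.filter (goodf : (Fin m → Fin n) → Prop), ‖(Wprod h f).trace‖ :=
            norm_sum_le _ _
        _ ≤ ∑ _f ∈ Finset.univ.filter (goodf : (Fin m → Fin n) → Prop), (2:ℝ) ^ n := by
            apply Finset.sum_le_sum
            intro f _
            calc ‖(Wprod h f).trace‖ ≤ (Fintype.card (Cfg n) : ℝ) * opNorm (Wprod h f) :=
                  norm_trace_le _
              _ ≤ (Fintype.card (Cfg n) : ℝ) * 1 := by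
                  apply mul_le_mul_of_nonneg_left (opNorm_Wprod_le hn2 hnorm f) (by positivity)
              _ = (2:ℝ) ^ n := by rw [card_Cfg]; push_cast; ring
        _ = ((Finset.univ.filter (goodf : (Fin m → Fin n) → Prop)).card : ℝ) * 2 ^ n := by
            rw [Finset.sum_const, nsmul_eq_mul]
    have hcardb : ((Finset.univ.filter (goodf : (Fin m → Fin n) → Prop)).card : ℝ)
        ≤ (2:ℝ) ^ m * ((n:ℝ) + 1) ^ (m / 2) * (((m * (2 * m + 1)) ^ m : ℕ) : ℝ) := by
      have := good_card_bound (n := n) (m := m) hn0 hm2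
      calc ((Finset.univ.filter (goodf : (Fin m → Fin n) → Prop)).card : ℝ)
          ≤ ((2 ^ m * (n + 1) ^ (m / 2) * (m * (2 * m + 1)) ^ m : ℕ) : ℝ) := by
            exact_mod_cast this
        _ = (2:ℝ) ^ m * ((n:ℝ) + 1) ^ (m / 2) * (((m * (2 * m + 1)) ^ m : ℕ) : ℝ) := by
            push_cast; ring
    have htle : t ≤ ‖((ham h n) ^ m).trace‖ := by
      rw [htrm, Complex.norm_real]
      exact le_abs_self t
    have hnp1 : ((n:ℝ) + 1) ^ (m / 2) ≤ 2 ^ (m / 2) * (n:ℝ) ^ (m / 2) := by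
      rw [← mul_pow]
      apply pow_le_pow_left₀ (by positivity)
      have : (1:ℝ) ≤ (n:ℝ) := by exact_mod_cast hn0
      linarith
    have hnpos : (0:ℝ) < (n:ℝ) ^ (m / 2) := by positivity
    have hKnn : (0:ℝ) ≤ (((m * (2 * m + 1)) ^ m : ℕ) : ℝ) := by positivity
    have main : t / 2 ^ n
        ≤ (2:ℝ) ^ m * 2 ^ (m / 2) * (((m * (2 * m + 1)) ^ m : ℕ) : ℝ) * (n:ℝ) ^ (m / 2) := by
      rw [div_le_iff₀ hd]
      calc t ≤ ‖((ham h n) ^ m).trace‖ := htle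
        _ ≤ ((Finset.univ.filter (goodf : (Fin m → Fin n) → Prop)).card : ℝ) * 2 ^ n := hbound
        _ ≤ ((2:ℝ) ^ m * ((n:ℝ) + 1) ^ (m / 2) * (((m * (2 * m + 1)) ^ m : ℕ) : ℝ)) * 2 ^ n := by
            apply mul_le_mul_of_nonneg_right hcardb (le_of_lt hd)
        _ ≤ ((2:ℝ) ^ m * (2 ^ (m / 2) * (n:ℝ) ^ (m / 2)) * (((m * (2 * m + 1)) ^ m : ℕ) : ℝ))
              * 2 ^ n := by
            apply mul_le_mul_of_nonneg_right _ (le_of_lt hd)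
            apply mul_le_mul_of_nonneg_right _ hKnn
            apply mul_le_mul_of_nonneg_left hnp1 (by positivity)
        _ = (2:ℝ) ^ m * 2 ^ (m / 2) * (((m * (2 * m + 1)) ^ m : ℕ) : ℝ) * (n:ℝ) ^ (m / 2)
              * 2 ^ n := by ring
    calc t / 2 ^ n
        ≤ (2:ℝ) ^ m * 2 ^ (m / 2) * (((m * (2 * m + 1)) ^ m : ℕ) : ℝ) * (n:ℝ) ^ (m / 2) := main
      _ ≤ ((2:ℝ) ^ m * 2 ^ (m / 2) * (((m * (2 * m + 1)) ^ m : ℕ) : ℝ) + 1) * (n:ℝ) ^ (m / 2) := by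
          apply mul_le_mul_of_nonneg_right _ (le_of_lt hnpos)
          linarith
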